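/- Let G_1 and G_2 be finite simple graphs on the same linearly ordered vertex set (V, ≺), both in standard form, and suppose |G_2⟩ = U |G_1⟩ where U is the local unitary acting by X(α_u) on each qubit u ∈ V_X^{G_1}, by Z(β_v) on each qubit v ∈ V_Z^{G_1}, and by the identity on all other qubits. Then: (i) for every v ∈ V_Z^{G_1}, β_v ≡ −Σ_{u ∈ N_{G_1}(v) ∩ V_X^{G_1}} α_u (mod 2π); (ii) for every k ∈ ℕ and every K ⊆ V_Z^{G_1} with |K| = k + 2, Σ_{u ∈ Λ_{G_1}^K ∩ V_X^{G_1}} α_u ≡ 0 (mod π/2^{k+δ(k)}), where δ(0) = 1 and δ(k) = 0 for k > 0. -/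

import Mathlib

open Classical Real Matrix

noncomputable section

variable {V : Type} [Fintype V] [DecidableEq V]

/-- The number of edges of `G` with both endpoints in `A`. -/
def edgeCount (G : SimpleGraph V) (A : Finset V) : ℕ :=
  (Finset.univ.filter (fun p : V × V => G.Adj p.1 p.2 ∧ p.1 ∈ A ∧ p.2 ∈ A)).card / 2

/-- The graph state `|G⟩`, as a vector in `ℂ^(V → {0,1})`. -/
def graphState (G : SimpleGraph V) : (V → Bool) → ℂ :=
  fun x => (-1 : ℂ) ^ edgeCount G (Finset.univ.filter (fun v => x v = true)) /
    (Real.sqrt (2 ^ Fintype.card V) : ℂ)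

/-- The odd neighbourhood `Odd_G(D)` of a set `D` of vertices. -/
def oddNbhd (G : SimpleGraph V) (D : Finset V) : Finset V :=
  Finset.univ.filter (fun v => Odd ((D.filter (fun u => G.Adj v u)).card))

/-- The operator `X_A` flipping the coordinates in `A`. -/
def Xop (A : Finset V) (ψ : (V → Bool) → ℂ) : (V → Bool) → ℂ :=
  fun x => ψ (fun v => if v ∈ A then !(x v) else x v)

/-- The operator `Z_A`. -/
def Zop (A : Finset V) (ψ : (V → Bool) → ℂ) : (V → Bool) → ℂ :=
  fun x => (-1 : ℂ) ^ ((A.filter (fun v => x v = true)).card) * ψ x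

/-- The Pauli operator `𝒫_D^G = (−1)^{|G[D]|} X_D Z_{Odd_G(D)}`. -/
def pauliP (G : SimpleGraph V) (D : Finset V) (ψ : (V → Bool) → ℂ) : (V → Bool) → ℂ :=
  fun x => (-1 : ℂ) ^ edgeCount G D * Xop D (Zop (oddNbhd G D) ψ) x

/-- Index of a Bool in `Fin 2`. -/
def boolIdx (b : Bool) : Fin 2 := if b then 1 else 0

/-- Action of a local (tensor-product) operator `⊗_u U_u` on the state space. -/
def applyLocal (U : V → Matrix (Fin 2) (Fin 2) ℂ) (ψ : (V → Bool) → ℂ) : (V → Bool) → ℂ :=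
  fun x => ∑ y : V → Bool, (∏ u, U u (boolIdx (x u)) (boolIdx (y u))) * ψ y

/-- A local unitary: each single-qubit factor is unitary. -/
def IsLocalUnitary (U : V → Matrix (Fin 2) (Fin 2) ℂ) : Prop :=
  ∀ u, U u ∈ Matrix.unitaryGroup (Fin 2) ℂ

def Xgate : Matrix (Fin 2) (Fin 2) ℂ := !![0, 1; 1, 0]

def Zgate : Matrix (Fin 2) (Fin 2) ℂ := !![1, 0; 0, -1]

def Ygate : Matrix (Fin 2) (Fin 2) ℂ := Complex.I • (Xgate * Zgate)

def Hgate : Matrix (Fin 2) (Fin 2) ℂ := (1 / (Real.sqrt 2 : ℂ)) • !![1, 1; 1, -1]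

/-- The rotation `Z(α) = diag(1, e^{iα})`. -/
def Zrot (α : ℝ) : Matrix (Fin 2) (Fin 2) ℂ := !![1, 0; 0, Complex.exp (Complex.I * (α : ℂ))]

/-- The rotation `X(α) = H Z(α) H`. -/
def Xrot (α : ℝ) : Matrix (Fin 2) (Fin 2) ℂ := Hgate * Zrot α * Hgate

/-- A 2×2 matrix is in the Pauli group. -/
def IsPauliGate (M : Matrix (Fin 2) (Fin 2) ℂ) : Prop :=
  ∃ z ∈ ({1, -1, Complex.I, -Complex.I} : Set ℂ),
    ∃ P ∈ ({1, Xgate, Ygate, Zgate} : Set (Matrix (Fin 2) (Fin 2) ℂ)), M = z • P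

/-- A 2×2 unitary is Clifford if it maps `X` and `Z` to the Pauli group under conjugation. -/
def IsCliffordGate (C : Matrix (Fin 2) (Fin 2) ℂ) : Prop :=
  C ∈ Matrix.unitaryGroup (Fin 2) ℂ ∧ IsPauliGate (C * Xgate * Cᴴ) ∧ IsPauliGate (C * Zgate * Cᴴ)

/-- The subgroup `LC_r` of 2×2 unitaries generated by `H` and `Z(π/2^r)`. -/
inductive InLCr (r : ℕ) : Matrix (Fin 2) (Fin 2) ℂ → Prop
  | H : InLCr r Hgate
  | Z : InLCr r (Zrot (π / 2 ^ r))
  | one : InLCr r 1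
  | mul {A B : Matrix (Fin 2) (Fin 2) ℂ} : InLCr r A → InLCr r B → InLCr r (A * B)
  | inv {A : Matrix (Fin 2) (Fin 2) ℂ} : InLCr r A → InLCr r A⁻¹

/-- Two states are LU-equivalent when some local unitary maps one to the other. -/
def LUequiv (ψ φ : (V → Bool) → ℂ) : Prop :=
  ∃ U : V → Matrix (Fin 2) (Fin 2) ℂ, IsLocalUnitary U ∧ φ = applyLocal U ψ

/-- Two states are `LC_r`-equivalent when some local unitary with all factors in `LC_r`
maps one to the other. -/
def LCrEquiv (r : ℕ) (ψ φ : (V → Bool) → ℂ) : Prop :=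
  ∃ U : V → Matrix (Fin 2) (Fin 2) ℂ, (∀ u, InLCr r (U u)) ∧ φ = applyLocal U ψ

/-- Local complementation of `G` at a vertex `u`: `v ∼ w` iff `(v ∼_G w) XOR (v, w ∈ N_G(u))`. -/
def localComp (G : SimpleGraph V) (u : V) : SimpleGraph V where
  Adj v w := v ≠ w ∧ ¬ (G.Adj v w ↔ G.Adj u v ∧ G.Adj u w)
  symm := by
    constructor
    intro v w h
    obtain ⟨h1, h2⟩ := h
    refine ⟨h1.symm, fun h => h2 ?_⟩
    rw [G.adj_comm w v] at h
    tauto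
  loopless := ⟨fun v h => h.1 rfl⟩

/-- Local equivalence: related by a sequence of local complementations. -/
def LocalEquiv : SimpleGraph V → SimpleGraph V → Prop :=
  Relation.ReflTransGen (fun G G' => ∃ u, G' = localComp G u)

/-- The local Clifford operator `L_u^G = X_u(π/2) ⊗_{v ∈ N_G(u)} Z_v(−π/2)`
implementing the local complementation at `u`. -/
def Lmat (G : SimpleGraph V) (u : V) : V → Matrix (Fin 2) (Fin 2) ℂ :=
  fun v => if v = u then Xrot (π / 2) else if G.Adj u v then Zrot (-(π / 2)) else 1

/-- The local Clifford operator implementing a sequence of local complementations: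
`lcSeqOp G [a₁, …, a_m] = L_{a_m}^{G^{(m−1)}} ⋯ L_{a_1}^{G^{(0)}}` (pointwise products). -/
def lcSeqOp : SimpleGraph V → List V → V → Matrix (Fin 2) (Fin 2) ℂ
  | _, [] => fun _ => 1
  | G, a :: l => fun v => lcSeqOp (localComp G a) l v * Lmat G a v

/-- The support of a multiset of vertices. -/
def msSupp (S : V → ℕ) : Finset V := Finset.univ.filter (fun u => 0 < S u)

/-- A multiset of vertices is independent in `G` when its support is an independent set. -/
def MsIndep (G : SimpleGraph V) (S : V → ℕ) : Prop :=
  ∀ u v, 0 < S u → 0 < S v → ¬ G.Adj u v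

/-- `S • A = Σ_{u ∈ A} S(u)`. -/
def msDot (S : V → ℕ) (A : Finset V) : ℕ := ∑ u ∈ A, S u

/-- The common neighbourhood `Λ_G^K = ⋂_{u ∈ K} N_G(u)`. -/
def commonNbhd (G : SimpleGraph V) (K : Finset V) : Finset V :=
  Finset.univ.filter (fun v => ∀ u ∈ K, G.Adj u v)

/-- The Kronecker delta `δ(0) = 1`, `δ(k) = 0` for `k > 0`. -/
def kdelta (k : ℕ) : ℕ := if k = 0 then 1 else 0

/-- `S` is `r`-incident in `G`. -/
def RIncident (G : SimpleGraph V) (r : ℕ) (S : V → ℕ) : Prop :=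
  ∀ k < r, ∀ K : Finset V, (∀ u ∈ K, u ∉ msSupp S) → K.card = k + 2 →
    2 ^ (r - k - kdelta k) ∣ msDot S (commonNbhd G K)

/-- The `r`-local complementation `G ⋆^r S`. -/
def rLocalComp (G : SimpleGraph V) (r : ℕ) (S : V → ℕ) : SimpleGraph V where
  Adj u v := u ≠ v ∧
    ¬ (G.Adj u v ↔ msDot S (commonNbhd G {u, v}) ≡ 2 ^ (r - 1) [MOD 2 ^ r])
  symm := by
    constructor
    intro u v h
    obtain ⟨h1, h2⟩ := h
    refine ⟨h1.symm, fun h => h2 ?_⟩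
    rw [G.adj_comm v u, Finset.pair_comm v u] at h
    exact h
  loopless := ⟨fun u h => h.1 rfl⟩

/-- `G ⋆^r S` is valid when `S` is independent and `r`-incident. -/
def ValidRLC (G : SimpleGraph V) (r : ℕ) (S : V → ℕ) : Prop :=
  MsIndep G S ∧ RIncident G r S

/-- `r`-local equivalence: related by a sequence of valid `r`-local complementations. -/
def RLocalEquiv (r : ℕ) : SimpleGraph V → SimpleGraph V → Prop :=
  Relation.ReflTransGen (fun G G' => ∃ S : V → ℕ, ValidRLC G r S ∧ G' = rLocalComp G r S)

/-- A local set of `G`: a nonempty set of the form `D ∪ Odd_G(D)`. -/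
def IsLocalSet (G : SimpleGraph V) (L : Finset V) : Prop :=
  L.Nonempty ∧ ∃ D : Finset V, L = D ∪ oddNbhd G D

/-- A minimal local set of `G`. -/
def IsMLS (G : SimpleGraph V) (L : Finset V) : Prop :=
  IsLocalSet G L ∧ ∀ L' : Finset V, IsLocalSet G L' → L' ⊆ L → L' = L

/-- A vertex has type X in `G`. -/
def HasTypeX (G : SimpleGraph V) (u : V) : Prop :=
  (∃ L, IsMLS G L ∧ u ∈ L) ∧
  ∀ L D : Finset V, IsMLS G L → u ∈ L → L = D ∪ oddNbhd G D → u ∈ D ∧ u ∉ oddNbhd G D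

/-- A vertex has type Y in `G`. -/
def HasTypeY (G : SimpleGraph V) (u : V) : Prop :=
  (∃ L, IsMLS G L ∧ u ∈ L) ∧
  ∀ L D : Finset V, IsMLS G L → u ∈ L → L = D ∪ oddNbhd G D → u ∈ D ∧ u ∈ oddNbhd G D

/-- A vertex has type Z in `G`. -/
def HasTypeZ (G : SimpleGraph V) (u : V) : Prop :=
  (∃ L, IsMLS G L ∧ u ∈ L) ∧
  ∀ L D : Finset V, IsMLS G L → u ∈ L → L = D ∪ oddNbhd G D → u ∉ D ∧ u ∈ oddNbhd G D

/-- A vertex has type ⊥ in `G`. -/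
def HasTypeBot (G : SimpleGraph V) (u : V) : Prop :=
  ¬ HasTypeX G u ∧ ¬ HasTypeY G u ∧ ¬ HasTypeZ G u

/-- A graph on a linearly ordered vertex set is in standard form. -/
def StandardForm {W : Type} [Fintype W] [LinearOrder W] (G : SimpleGraph W) : Prop :=
  (∀ u, ¬ HasTypeY G u) ∧
  ∀ u, HasTypeX G u → ∀ v, G.Adj u v → HasTypeZ G v ∧ u < v

/-- The `k`-subsets of `[1, t]`. -/
abbrev KSubsets (t k : ℕ) := {A : Finset (Fin t) // A.card = k}

/-- The vertex set of the graphs `C_{t,k}` and `C'_{t,k}`. -/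
abbrev CtkVertex (t k : ℕ) := Fin t ⊕ KSubsets t k

/-- The bipartite graph `C_{t,k}`: `u ∈ [1,t]` is adjacent to a `k`-subset `A` iff `u ∈ A`. -/
def Ctk (t k : ℕ) : SimpleGraph (CtkVertex t k) :=
  SimpleGraph.fromRel (fun x y =>
    ∃ (u : Fin t) (A : KSubsets t k), x = Sum.inl u ∧ y = Sum.inr A ∧ u ∈ A.1)

/-- The graph `C'_{t,k}`: `C_{t,k}` together with all edges between distinct elements of `[1,t]`. -/
def Ctk' (t k : ℕ) : SimpleGraph (CtkVertex t k) :=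
  SimpleGraph.fromRel (fun x y =>
    (∃ (u : Fin t) (A : KSubsets t k), x = Sum.inl u ∧ y = Sum.inr A ∧ u ∈ A.1) ∨
    (∃ u v : Fin t, x = Sum.inl u ∧ y = Sum.inl v))

end

noncomputable section Helpers
open Finset Classical Real

variable {V : Type} [Fintype V] [DecidableEq V]

lemma typeX_typeZ_exclusive (G : SimpleGraph V) (u : V) (hx : HasTypeX G u)
    (hz : HasTypeZ G u) : False := by
  obtain ⟨⟨L, hL, huL⟩, hx2⟩ := hx
  obtain ⟨_, hz2⟩ := hz
  obtain ⟨D, hD⟩ := hL.1.2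
  exact (hz2 L D hL huL hD).1 ((hx2 L D hL huL hD).1)

lemma Zrot_00 (b : ℝ) : Zrot b 0 0 = 1 := by simp [Zrot]
lemma Zrot_11 (b : ℝ) : Zrot b 1 1 = Complex.exp (Complex.I * b) := by simp [Zrot]
lemma Zrot_offdiag (b : ℝ) {i j : Fin 2} (hij : i ≠ j) : Zrot b i j = 0 := by
  fin_cases i <;> fin_cases j <;> simp_all [Zrot]

lemma one_diag {i : Fin 2} : (1 : Matrix (Fin 2) (Fin 2) ℂ) i i = 1 := by simp
lemma one_offdiag {i j : Fin 2} (hij : i ≠ j) : (1 : Matrix (Fin 2) (Fin 2) ℂ) i j = 0 := by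
  simp [Matrix.one_apply, hij]

lemma sqrt_two_mul_self' : ((Real.sqrt 2 : ℝ) : ℂ) * ((Real.sqrt 2 : ℝ) : ℂ) = 2 := by
  rw [← Complex.ofReal_mul, Real.mul_self_sqrt (by norm_num)]
  norm_num

lemma Xrot_00 (a : ℝ) : Xrot a 0 0 = (1 + Complex.exp (Complex.I * a)) / 2 := by
  have h2 : ((Real.sqrt 2 : ℝ) : ℂ) * ((Real.sqrt 2 : ℝ) : ℂ) = 2 := by
    rw [← Complex.ofReal_mul, Real.mul_self_sqrt (by norm_num)]; norm_num
  have hne : ((Real.sqrt 2 : ℝ) : ℂ) ≠ 0 := by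
    intro hx; rw [hx] at h2; simp at h2
  simp only [Xrot, Hgate, Zrot, Matrix.mul_apply, Fin.sum_univ_two, Matrix.smul_apply,
    Matrix.cons_val', Matrix.cons_val_zero, Matrix.cons_val_one, Matrix.head_cons,
    Matrix.empty_val', Matrix.cons_val_fin_one, Matrix.head_fin_const, smul_eq_mul, Matrix.of_apply]
  field_simp
  ring_nf
  rw [sq, h2]; ring

lemma Xrot_01 (a : ℝ) : Xrot a 0 1 = (1 - Complex.exp (Complex.I * a)) / 2 := by
  have h2 : ((Real.sqrt 2 : ℝ) : ℂ) * ((Real.sqrt 2 : ℝ) : ℂ) = 2 := by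
    rw [← Complex.ofReal_mul, Real.mul_self_sqrt (by norm_num)]; norm_num
  have hne : ((Real.sqrt 2 : ℝ) : ℂ) ≠ 0 := by
    intro hx; rw [hx] at h2; simp at h2
  simp only [Xrot, Hgate, Zrot, Matrix.mul_apply, Fin.sum_univ_two, Matrix.smul_apply,
    Matrix.cons_val', Matrix.cons_val_zero, Matrix.cons_val_one, Matrix.head_cons,
    Matrix.empty_val', Matrix.cons_val_fin_one, Matrix.head_fin_const, smul_eq_mul, Matrix.of_apply]
  field_simp
  ring_nf
  rw [sq, h2]
  ring

lemma sum_prod_bool (f : V → Bool → ℂ) :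
    ∑ y : V → Bool, ∏ u, f u (y u) = ∏ u, (f u false + f u true) := by
  have h := Finset.prod_univ_sum (fun _ : V => (Finset.univ : Finset Bool)) (fun u b => f u b)
  rw [Fintype.piFinset_univ] at h
  rw [← h]
  apply Finset.prod_congr rfl
  intro u _
  rw [Fintype.sum_bool]
  ring

/-- directed edge count -/
def dEdge (G : SimpleGraph V) (A : Finset V) : ℕ :=
  (Finset.univ.filter (fun p : V × V => G.Adj p.1 p.2 ∧ p.1 ∈ A ∧ p.2 ∈ A)).card

lemma edgeCount_eq (G : SimpleGraph V) (A : Finset V) : edgeCount G A = dEdge G A / 2 := rfl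

lemma dEdge_eq_sum (G : SimpleGraph V) (A : Finset V) :
    dEdge G A = ∑ a : V, ∑ b : V, if G.Adj a b ∧ a ∈ A ∧ b ∈ A then 1 else 0 := by
  rw [dEdge, Finset.card_filter, Fintype.sum_prod_type]

lemma dEdge_even [LinearOrder V] (G : SimpleGraph V) (A : Finset V) :
    ∃ m, dEdge G A = 2 * m := by
  classical
  set s := Finset.univ.filter (fun p : V × V => G.Adj p.1 p.2 ∧ p.1 ∈ A ∧ p.2 ∈ A) with hs
  refine ⟨(s.filter (fun p => p.1 < p.2)).card, ?_⟩
  have hsplit : s.card = (s.filter (fun p => p.1 < p.2)).card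
      + (s.filter (fun p => ¬ p.1 < p.2)).card :=
    (Finset.card_filter_add_card_filter_not _).symm
  have hbij : (s.filter (fun p => ¬ p.1 < p.2)).card = (s.filter (fun p => p.1 < p.2)).card := by
    apply Finset.card_nbij' (fun p => Prod.swap p) (fun p => Prod.swap p)
    · rintro ⟨a, b⟩ hp
      simp only [Finset.mem_coe, Finset.mem_filter, hs, Finset.mem_univ, true_and] at hp ⊢
      obtain ⟨⟨hadj, h1, h2⟩, hlt⟩ := hp
      exact ⟨⟨hadj.symm, h2, h1⟩, lt_of_le_of_ne (not_lt.mp hlt) (Ne.symm hadj.ne)⟩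
    · rintro ⟨a, b⟩ hp
      simp only [Finset.mem_coe, Finset.mem_filter, hs, Finset.mem_univ, true_and] at hp ⊢
      obtain ⟨⟨hadj, h1, h2⟩, hlt⟩ := hp
      exact ⟨⟨hadj.symm, h2, h1⟩, not_lt.mpr hlt.le⟩
    · intro p _; exact Prod.swap_swap p
    · intro p _; exact Prod.swap_swap p
  have hd : dEdge G A = s.card := rfl
  omega

lemma dEdge_singleton (G : SimpleGraph V) (v : V) : dEdge G {v} = 0 := by
  rw [dEdge, Finset.card_eq_zero, Finset.filter_eq_empty_iff]
  rintro ⟨a, b⟩ -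
  rintro ⟨hadj, h1, h2⟩
  simp only [Finset.mem_singleton] at h1 h2
  subst h1; subst h2
  exact G.loopless.irrefl _ hadj

lemma edgeCount_singleton (G : SimpleGraph V) (v : V) : edgeCount G {v} = 0 := by
  rw [edgeCount_eq, dEdge_singleton]

lemma dEdge_union (G : SimpleGraph V) {A T : Finset V} (hdisj : ∀ u ∈ T, u ∉ A)
    (hindep : ∀ u ∈ T, ∀ v ∈ T, ¬ G.Adj u v) :
    dEdge G (A ∪ T) = dEdge G A + 2 * ∑ u ∈ T, (A.filter (fun w => G.Adj u w)).card := by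
  classical
  have key : ∀ a b : V, (if G.Adj a b ∧ a ∈ A ∪ T ∧ b ∈ A ∪ T then (1:ℕ) else 0)
      = (if G.Adj a b ∧ a ∈ A ∧ b ∈ A then 1 else 0)
        + (if G.Adj a b ∧ a ∈ A ∧ b ∈ T then 1 else 0)
        + (if G.Adj a b ∧ a ∈ T ∧ b ∈ A then 1 else 0) := by
    intro a b
    by_cases hadj : G.Adj a b
    · simp only [hadj, true_and, Finset.mem_union]
      by_cases haA : a ∈ A <;> by_cases hbA : b ∈ A <;> by_cases haT : a ∈ T <;>
        by_cases hbT : b ∈ T <;>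
        first
          | (exact absurd haA (hdisj a haT))
          | (exact absurd hbA (hdisj b hbT))
          | (exact absurd hadj (hindep a haT b hbT))
          | simp_all
    · simp [hadj]
  have hTA : ∀ a : V, (∑ b : V, if G.Adj a b ∧ a ∈ T ∧ b ∈ A then (1:ℕ) else 0)
      = if a ∈ T then (A.filter (fun w => G.Adj a w)).card else 0 := by
    intro a
    by_cases ha : a ∈ T
    · simp only [ha, if_true, true_and]
      rw [Finset.card_filter]
      rw [← Finset.sum_filter_add_sum_filter_not Finset.univ (fun b => b ∈ A)]
      rw [Finset.filter_univ_mem]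
      have h1 : ∀ b ∈ A, (if G.Adj a b ∧ b ∈ A then (1:ℕ) else 0) = if G.Adj a b then 1 else 0 := by
        intro b hb; simp [hb]
      have h2 : (∑ b ∈ Finset.univ.filter (fun b => ¬ b ∈ A),
          if G.Adj a b ∧ b ∈ A then (1:ℕ) else 0) = 0 := by
        apply Finset.sum_eq_zero; intro b hb
        simp only [Finset.mem_filter] at hb
        simp [hb.2]
      rw [Finset.sum_congr rfl h1, h2, add_zero]
    · simp only [ha, if_false]
      apply Finset.sum_eq_zero; intro b _
      simp [ha]
  have hAT : (∑ a : V, ∑ b : V, if G.Adj a b ∧ a ∈ A ∧ b ∈ T then (1:ℕ) else 0)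
      = ∑ a : V, ∑ b : V, if G.Adj a b ∧ a ∈ T ∧ b ∈ A then (1:ℕ) else 0 := by
    rw [Finset.sum_comm]
    apply Finset.sum_congr rfl; intro a _
    apply Finset.sum_congr rfl; intro b _
    apply if_congr _ rfl rfl
    constructor
    · rintro ⟨h1, h2, h3⟩; exact ⟨h1.symm, h3, h2⟩
    · rintro ⟨h1, h2, h3⟩; exact ⟨h1.symm, h3, h2⟩
  have hsum : (∑ a : V, ∑ b : V, if G.Adj a b ∧ a ∈ T ∧ b ∈ A then (1:ℕ) else 0)
      = ∑ u ∈ T, (A.filter (fun w => G.Adj u w)).card := by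
    rw [Finset.sum_congr rfl (fun a _ => hTA a)]
    rw [← Finset.sum_filter, Finset.filter_univ_mem]
  rw [dEdge_eq_sum, dEdge_eq_sum]
  simp only [key, Finset.sum_add_distrib]
  rw [hAT, hsum]
  ring

lemma neg_one_pow_edgeCount_union [LinearOrder V] (G : SimpleGraph V) {A T : Finset V}
    (hdisj : ∀ u ∈ T, u ∉ A) (hindep : ∀ u ∈ T, ∀ v ∈ T, ¬ G.Adj u v) :
    ((-1:ℂ)) ^ edgeCount G (A ∪ T)
      = (-1) ^ edgeCount G A * ∏ u ∈ T, (-1 : ℂ) ^ (A.filter (fun w => G.Adj u w)).card := by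
  obtain ⟨m, hm⟩ := dEdge_even G A
  have h := dEdge_union G hdisj hindep
  have h1 : edgeCount G (A ∪ T) = m + ∑ u ∈ T, (A.filter (fun w => G.Adj u w)).card := by
    rw [edgeCount_eq, h, hm]; omega
  have h2 : edgeCount G A = m := by rw [edgeCount_eq, hm]; omega
  rw [h1, h2, pow_add, Finset.prod_pow_eq_pow_sum]

end Helpers


section Powerset
variable {V : Type} [Fintype V] [DecidableEq V] {R : Type} [CommRing R]

lemma sum_powerset_prod (K : Finset V) (w : V → R) :
    ∑ K' ∈ K.powerset, ∏ a ∈ K', w a = ∏ a ∈ K, (w a + 1) := by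
  rw [Finset.prod_add]
  apply Finset.sum_congr rfl
  intro t _
  simp

lemma pw_odd (K' : Finset V) (p : V → Prop) [DecidablePred p] :
    (-1:ℝ)^K'.card * (if Odd ((K'.filter p).card) then 1 else 0)
      = ((∏ a ∈ K', (-1:ℝ)) - ∏ a ∈ K', (if p a then 1 else -1)) / 2 := by
  rw [Finset.prod_const]
  rw [← Finset.prod_filter_mul_prod_filter_not K' p]
  have e1 : ∏ a ∈ K'.filter p, (if p a then (1:ℝ) else -1) = 1 := by
    apply Finset.prod_eq_one; intro a ha; simp [(Finset.mem_filter.mp ha).2]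
  have e2 : ∏ a ∈ K'.filter (fun a => ¬ p a), (if p a then (1:ℝ) else -1)
      = (-1)^(K'.filter (fun a => ¬ p a)).card := by
    rw [← Finset.prod_const]; apply Finset.prod_congr rfl
    intro a ha; simp [(Finset.mem_filter.mp ha).2]
  rw [e1, e2, one_mul]
  have hc : (K'.filter p).card + (K'.filter (fun a => ¬ p a)).card = K'.card :=
    Finset.card_filter_add_card_filter_not p
  rw [← hc, pow_add]
  by_cases hodd : Odd (K'.filter p).card
  · rw [if_pos hodd, hodd.neg_one_pow]; ring
  · rw [if_neg hodd, (Nat.not_odd_iff_even.mp hodd).neg_one_pow]; ring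

lemma sum_powerset_sign_odd (K : Finset V) (hK : 2 ≤ K.card) (p : V → Prop) [DecidablePred p] :
    ∑ K' ∈ K.powerset, (-1:ℝ)^K'.card * (if Odd ((K'.filter p).card) then 1 else 0)
      = if (∀ a ∈ K, p a) then -((2:ℝ)^(K.card - 1)) else 0 := by
  rw [Finset.sum_congr rfl (fun K' _ => pw_odd K' p)]
  rw [← Finset.sum_div, Finset.sum_sub_distrib, sum_powerset_prod, sum_powerset_prod]
  have hKne : K.card ≠ 0 := by omega
  have h0 : ∏ a ∈ K, ((-1:ℝ) + 1) = 0 := by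
    rw [show ((-1:ℝ) + 1) = 0 by ring, Finset.prod_const, zero_pow hKne]
  rw [h0]
  by_cases hall : ∀ a ∈ K, p a
  · rw [if_pos hall]
    have : ∏ a ∈ K, ((if p a then (1:ℝ) else -1) + 1) = 2^K.card := by
      rw [← Finset.prod_const]
      apply Finset.prod_congr rfl
      intro a ha; rw [if_pos (hall a ha)]; norm_num
    rw [this]
    have h1 : K.card - 1 + 1 = K.card := by omega
    have h2 : (2:ℝ)^K.card = 2^(K.card-1) * 2 := by rw [← pow_succ, h1]
    rw [h2]
    ring
  · rw [if_neg hall]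
    push_neg at hall
    obtain ⟨a, ha, hpa⟩ := hall
    have : ∏ a ∈ K, ((if p a then (1:ℝ) else -1) + 1) = 0 := by
      apply Finset.prod_eq_zero ha
      simp [hpa]
    rw [this]
    ring

lemma prod_ite_eq_sign (K' : Finset V) (a : V) :
    ∏ c ∈ K', (if c = a then (1:ℤ) else -1) = (-1)^K'.card * (if a ∈ K' then -1 else 1) := by
  have step : ∀ c, (if c = a then (1:ℤ) else -1) = (-1) * (if c = a then -1 else 1) := by
    intro c; by_cases hc : c = a <;> simp [hc]
  rw [Finset.prod_congr rfl (fun c _ => step c), Finset.prod_mul_distrib, Finset.prod_const,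
    Finset.prod_ite_eq' K' a (fun _ => (-1:ℤ))]

lemma pw_pair (K' : Finset V) (a b : V) :
    4 * ((-1:ℤ)^K'.card * (if a ∈ K' ∧ b ∈ K' then 1 else 0))
      = (∏ c ∈ K', (-1:ℤ)) - (∏ c ∈ K', if c = a then (1:ℤ) else -1)
        - (∏ c ∈ K', if c = b then (1:ℤ) else -1)
        + (∏ c ∈ K', (if c = a then (1:ℤ) else -1) * ((if c = b then (1:ℤ) else -1) * -1)) := by
  have hsq : (-1:ℤ)^K'.card * (-1)^K'.card = 1 := by
    rw [← pow_add]; exact Even.neg_one_pow ⟨K'.card, rfl⟩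
  have pm : ∏ c ∈ K', (if c = a then (1:ℤ) else -1) * ((if c = b then (1:ℤ) else -1) * -1)
      = (∏ c ∈ K', (if c = a then (1:ℤ) else -1))
        * ((∏ c ∈ K', (if c = b then (1:ℤ) else -1)) * ∏ c ∈ K', (-1:ℤ)) := by
    rw [Finset.prod_mul_distrib, Finset.prod_mul_distrib]
  rw [pm, prod_ite_eq_sign, prod_ite_eq_sign, Finset.prod_const]
  by_cases ha : a ∈ K' <;> by_cases hb : b ∈ K' <;>
    simp only [ha, hb, if_true, if_false, true_and, and_true, false_and, and_false,
      mul_one, mul_neg_one] <;>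
    first
      | linear_combination (-(-1:ℤ)^K'.card) * hsq
      | linear_combination ((-1:ℤ)^K'.card) * hsq

lemma sum_powerset_pair (K : Finset V) (hK : 3 ≤ K.card) (a b : V) :
    ∑ K' ∈ K.powerset, (-1:ℤ)^K'.card * (if a ∈ K' ∧ b ∈ K' then 1 else 0) = 0 := by
  have h4 : (4:ℤ) * ∑ K' ∈ K.powerset, (-1:ℤ)^K'.card * (if a ∈ K' ∧ b ∈ K' then 1 else 0) = 0 := by
    rw [Finset.mul_sum]
    rw [Finset.sum_congr rfl (fun K' _ => pw_pair K' a b)]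
    rw [Finset.sum_add_distrib, Finset.sum_sub_distrib, Finset.sum_sub_distrib,
      sum_powerset_prod, sum_powerset_prod, sum_powerset_prod, sum_powerset_prod]
    have hne : K.Nonempty := Finset.card_pos.mp (by omega)
    have h0 : ∏ c ∈ K, ((-1:ℤ) + 1) = 0 := by
      obtain ⟨c, hc⟩ := hne
      exact Finset.prod_eq_zero hc (by ring)
    have hca : ∃ c ∈ K, c ≠ a ∧ c ≠ b := by
      have h1 : 3 - 2 ≤ ((K.erase a).erase b).card := by
        calc 3 - 2 ≤ K.card - 2 := by omega
        _ ≤ (K.erase a).card - 1 := by have := Finset.pred_card_le_card_erase (s := K) (a := a); omega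
        _ ≤ ((K.erase a).erase b).card := Finset.pred_card_le_card_erase
      have h2 : 0 < ((K.erase a).erase b).card := by omega
      obtain ⟨c, hc⟩ := Finset.card_pos.mp h2
      rw [Finset.mem_erase, Finset.mem_erase] at hc
      exact ⟨c, hc.2.2, hc.2.1, hc.1⟩
    obtain ⟨c, hcK, hca', hcb'⟩ := hca
    have h1 : ∏ c ∈ K, ((if c = a then (1:ℤ) else -1) + 1) = 0 :=
      Finset.prod_eq_zero hcK (by simp [hca'])
    have h2 : ∏ c ∈ K, ((if c = b then (1:ℤ) else -1) + 1) = 0 :=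
      Finset.prod_eq_zero hcK (by simp [hcb'])
    have h3 : ∏ c ∈ K, ((if c = a then (1:ℤ) else -1) * ((if c = b then (1:ℤ) else -1) * -1) + 1) = 0 :=
      Finset.prod_eq_zero hcK (by simp [hca', hcb'])
    rw [h0, h1, h2, h3]
    ring
  omega

end Powerset


section EdgeSum
variable {V : Type} [Fintype V] [DecidableEq V]

lemma sum_powerset_dEdge (K : Finset V) (hK : 3 ≤ K.card) (G : SimpleGraph V) :
    ∑ K' ∈ K.powerset, (-1:ℤ)^K'.card * (dEdge G K' : ℤ) = 0 := by
  classical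
  have hcast : ∀ K'' : Finset V, ((dEdge G K'' : ℤ))
      = ∑ a : V, ∑ b : V, (if G.Adj a b ∧ a ∈ K'' ∧ b ∈ K'' then (1:ℤ) else 0) := by
    intro K''
    rw [dEdge_eq_sum]
    push_cast
    rfl
  calc ∑ K' ∈ K.powerset, (-1:ℤ)^K'.card * (dEdge G K' : ℤ)
      = ∑ K' ∈ K.powerset, ∑ a : V, ∑ b : V,
          (-1:ℤ)^K'.card * (if G.Adj a b ∧ a ∈ K' ∧ b ∈ K' then (1:ℤ) else 0) := by
        apply Finset.sum_congr rfl; intro K' _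
        rw [hcast, Finset.mul_sum]
        apply Finset.sum_congr rfl; intro a _
        rw [Finset.mul_sum]
    _ = ∑ a : V, ∑ K' ∈ K.powerset, ∑ b : V,
          (-1:ℤ)^K'.card * (if G.Adj a b ∧ a ∈ K' ∧ b ∈ K' then (1:ℤ) else 0) := Finset.sum_comm
    _ = ∑ a : V, ∑ b : V, ∑ K' ∈ K.powerset,
          (-1:ℤ)^K'.card * (if G.Adj a b ∧ a ∈ K' ∧ b ∈ K' then (1:ℤ) else 0) := by
        apply Finset.sum_congr rfl; intro a _; exact Finset.sum_comm
    _ = 0 := by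
        apply Finset.sum_eq_zero; intro a _
        apply Finset.sum_eq_zero; intro b _
        by_cases hadj : G.Adj a b
        · have : ∀ K' : Finset V, (if G.Adj a b ∧ a ∈ K' ∧ b ∈ K' then (1:ℤ) else 0)
              = (if a ∈ K' ∧ b ∈ K' then (1:ℤ) else 0) := by
            intro K'; simp [hadj]
          rw [Finset.sum_congr rfl (fun K' _ => by rw [this K'])]
          exact sum_powerset_pair K hK a b
        · simp [hadj]

lemma sum_powerset_edgeCount [LinearOrder V] (K : Finset V) (hK : 3 ≤ K.card)
    (G : SimpleGraph V) :
    ∑ K' ∈ K.powerset, (-1:ℤ)^K'.card * (edgeCount G K' : ℤ) = 0 := by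
  have key : ∀ K'' : Finset V, (dEdge G K'' : ℤ) = 2 * (edgeCount G K'' : ℤ) := by
    intro K''
    obtain ⟨m, hm⟩ := dEdge_even G K''
    rw [edgeCount_eq, hm]
    have : 2 * m / 2 = m := by omega
    rw [this]
    push_cast
    ring
  have h2 : (2:ℤ) * ∑ K' ∈ K.powerset, (-1:ℤ)^K'.card * (edgeCount G K' : ℤ) = 0 := by
    rw [Finset.mul_sum, ← sum_powerset_dEdge K hK G]
    apply Finset.sum_congr rfl
    intro K' _
    rw [key K']
    ring
  omega

end EdgeSum


section Master
open Finset

lemma boolIdx_false : boolIdx false = 0 := rfl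
lemma boolIdx_true : boolIdx true = 1 := rfl

lemma boolIdx_ne {b b' : Bool} (h : b ≠ b') : boolIdx b ≠ boolIdx b' := by
  cases b <;> cases b' <;> simp_all [boolIdx]

lemma master {V : Type} [Fintype V] [LinearOrder V] (G₁ G₂ : SimpleGraph V)
    (h₁ : StandardForm G₁) (α β : V → ℝ)
    (h : graphState G₂ = applyLocal (fun u =>
        if HasTypeX G₁ u then Xrot (α u) else if HasTypeZ G₁ u then Zrot (β u) else 1)
        (graphState G₁))
    (K' : Finset V) (hK' : ∀ v ∈ K', HasTypeZ G₁ v) :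
    ∃ m : ℤ, (∑ v ∈ K', β v)
      + (∑ u ∈ Finset.univ.filter (fun u => HasTypeX G₁ u ∧
            Odd ((K'.filter (fun w => G₁.Adj u w)).card)), α u)
      = π * ((edgeCount G₁ K' : ℝ) + (edgeCount G₂ K' : ℝ)) + (m : ℝ) * (2 * π) := by
  classical
  set n := Fintype.card V with hn
  set x : V → Bool := fun v => decide (v ∈ K') with hxdef
  have hXK : ∀ u, HasTypeX G₁ u → u ∉ K' := by
    intro u hu hmem
    exact typeX_typeZ_exclusive G₁ u hu (hK' u hmem)
  have hxX : ∀ u, HasTypeX G₁ u → x u = false := by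
    intro u hu
    simp [hxdef, hXK u hu]
  have hindep : ∀ u v, HasTypeX G₁ u → HasTypeX G₁ v → ¬ G₁.Adj u v := by
    intro u v hu hv hadj
    exact typeX_typeZ_exclusive G₁ v hv ((h₁.2 u hu v hadj).1)
  have hsupp : Finset.univ.filter (fun v => x v = true) = K' := by
    ext v
    simp [hxdef]
  set nn : V → ℕ := fun u => (K'.filter (fun w => G₁.Adj u w)).card with hnn
  set U : V → Matrix (Fin 2) (Fin 2) ℂ := fun u =>
    if HasTypeX G₁ u then Xrot (α u) else if HasTypeZ G₁ u then Zrot (β u) else 1 with hU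
  set f : V → Bool → ℂ := fun u b =>
    if HasTypeX G₁ u then
      Xrot (α u) 0 (boolIdx b) * (if b then (-1:ℂ)^(nn u) else 1)
    else if b = x u then (if u ∈ K' then Complex.exp (Complex.I * β u) else 1) else 0
    with hf
  have hsqrt_ne : ((Real.sqrt (2^n) : ℝ) : ℂ) ≠ 0 := by
    have : (0:ℝ) < Real.sqrt (2^n) := Real.sqrt_pos.mpr (by positivity)
    exact_mod_cast ne_of_gt this
  -- Claim 1: pointwise factorization
  have claim1 : ∀ y : V → Bool,
      (∏ u, U u (boolIdx (x u)) (boolIdx (y u))) * graphState G₁ y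
        = ((-1:ℂ)^(edgeCount G₁ K') / (Real.sqrt (2^n) : ℂ)) * ∏ u, f u (y u) := by
    intro y
    by_cases hy : ∀ u, ¬ HasTypeX G₁ u → y u = x u
    · -- y agrees with x off X
      set T : Finset V := Finset.univ.filter (fun u => HasTypeX G₁ u ∧ y u = true) with hT
      have hTmem : ∀ u, u ∈ T ↔ HasTypeX G₁ u ∧ y u = true := by
        intro u; simp [hT]
      have hsuppy : Finset.univ.filter (fun v => y v = true) = K' ∪ T := by
        ext v
        simp only [Finset.mem_filter, Finset.mem_univ, true_and, Finset.mem_union, hTmem]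
        by_cases hv : HasTypeX G₁ v
        · constructor
          · intro hyv; exact Or.inr ⟨hv, hyv⟩
          · rintro (hvK | ⟨_, hyv⟩)
            · exact absurd hvK (hXK v hv)
            · exact hyv
        · have hyx : y v = x v := hy v hv
          rw [hyx]
          simp only [hxdef, decide_eq_true_eq]
          constructor
          · intro hvK; exact Or.inl hvK
          · rintro (hvK | ⟨hvX, _⟩)
            · exact hvK
            · exact absurd hvX hv
      have hdisj : ∀ u ∈ T, u ∉ K' := by
        intro u hu; exact hXK u ((hTmem u).mp hu).1
      have hTindep : ∀ u ∈ T, ∀ v ∈ T, ¬ G₁.Adj u v := by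
        intro u hu v hv
        exact hindep u v ((hTmem u).mp hu).1 ((hTmem v).mp hv).1
      have hstate : graphState G₁ y
          = ((-1:ℂ)^(edgeCount G₁ K') * ∏ u ∈ T, (-1:ℂ)^(nn u)) / (Real.sqrt (2^n) : ℂ) := by
        rw [graphState, hsuppy, ← hn]
        rw [neg_one_pow_edgeCount_union G₁ hdisj hTindep]
      have hfactor : ∀ u, f u (y u) = U u (boolIdx (x u)) (boolIdx (y u))
          * (if HasTypeX G₁ u ∧ y u = true then (-1:ℂ)^(nn u) else 1) := by
        intro u
        by_cases hu : HasTypeX G₁ u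
        · rw [hf, hU]
          simp only [hu, if_true, true_and, hxX u hu, boolIdx_false]
        · have hyx : y u = x u := hy u hu
          rw [hf, hU]
          simp only [hu, if_false, hyx, if_true]
          by_cases huK : u ∈ K'
          · have hz : HasTypeZ G₁ u := hK' u huK
            have hxu : x u = true := by simp [hxdef, huK]
            simp only [huK, if_true, hz, hxu, boolIdx_true, hu, if_false, if_true]
            rw [Zrot_11]
            simp
          · have hxu : x u = false := by simp [hxdef, huK]
            simp only [huK, if_false, hxu, boolIdx_false, hu]
            by_cases hz : HasTypeZ G₁ u
            · simp only [hz, if_true]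
              rw [Zrot_00]
              simp
            · simp only [hz, if_false]
              rw [one_diag]
              simp
      have hprodT : (∏ u, (if HasTypeX G₁ u ∧ y u = true then (-1:ℂ)^(nn u) else 1))
          = ∏ u ∈ T, (-1:ℂ)^(nn u) := by
        rw [← Finset.prod_subset (Finset.subset_univ T)]
        · apply Finset.prod_congr rfl
          intro u hu
          rw [if_pos ((hTmem u).mp hu)]
        · intro u _ hu
          rw [if_neg (fun hc => hu ((hTmem u).mpr hc))]
      calc (∏ u, U u (boolIdx (x u)) (boolIdx (y u))) * graphState G₁ y
          = (∏ u, U u (boolIdx (x u)) (boolIdx (y u)))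
            * (((-1:ℂ)^(edgeCount G₁ K') * ∏ u ∈ T, (-1:ℂ)^(nn u)) / (Real.sqrt (2^n) : ℂ)) := by
            rw [hstate]
        _ = ((-1:ℂ)^(edgeCount G₁ K') / (Real.sqrt (2^n) : ℂ))
            * ((∏ u, U u (boolIdx (x u)) (boolIdx (y u))) * ∏ u ∈ T, (-1:ℂ)^(nn u)) := by
            ring
        _ = ((-1:ℂ)^(edgeCount G₁ K') / (Real.sqrt (2^n) : ℂ)) * ∏ u, f u (y u) := by
            congr 1
            rw [← hprodT, ← Finset.prod_mul_distrib]
            exact Finset.prod_congr rfl (fun u _ => (hfactor u).symm)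
    · -- some off-X coordinate disagrees: both sides vanish
      push_neg at hy
      obtain ⟨u₀, hu₀X, hneq⟩ := hy
      have hzero1 : U u₀ (boolIdx (x u₀)) (boolIdx (y u₀)) = 0 := by
        have hne : boolIdx (x u₀) ≠ boolIdx (y u₀) := boolIdx_ne (Ne.symm hneq)
        rw [hU]
        simp only [hu₀X, if_false]
        by_cases hz : HasTypeZ G₁ u₀
        · simp only [hz, if_true]
          exact Zrot_offdiag _ hne
        · simp only [hz, if_false]
          exact one_offdiag hne
      have hzero2 : f u₀ (y u₀) = 0 := by
        rw [hf]
        simp only [hu₀X, if_false, hneq, if_false]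
      rw [Finset.prod_eq_zero (Finset.mem_univ u₀) hzero1,
        Finset.prod_eq_zero (Finset.mem_univ u₀) hzero2]
      ring
  -- sum over y and factorize
  have hx := congrFun h x
  rw [applyLocal] at hx
  rw [Finset.sum_congr rfl (fun y _ => claim1 y), ← Finset.mul_sum, sum_prod_bool] at hx
  -- compute each factor
  set γ : V → ℝ := fun u =>
    if HasTypeX G₁ u then (if Odd (nn u) then α u else 0)
    else (if u ∈ K' then β u else 0) with hγ
  have claim2 : ∀ u, f u false + f u true = Complex.exp (Complex.I * γ u) := by
    intro u
    rw [hf, hγ]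
    by_cases hu : HasTypeX G₁ u
    · simp only [hu, if_true, if_false, boolIdx_false, boolIdx_true, mul_one]
      rw [Xrot_00, Xrot_01]
      by_cases hodd : Odd (nn u)
      · rw [if_pos hodd, hodd.neg_one_pow]
        norm_num
        ring
      · rw [if_neg hodd, (Nat.not_odd_iff_even.mp hodd).neg_one_pow]
        norm_num [Complex.exp_zero]
        ring
    · simp only [hu, if_false]
      cases hxu : x u
      · simp only [hxu]
        norm_num
        by_cases huK : u ∈ K'
        · exact absurd hxu (by simp [hxdef, huK])
        · simp [huK, Complex.exp_zero]
      · simp only [hxu]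
        norm_num
        by_cases huK : u ∈ K'
        · simp [huK]
        · exact absurd hxu (by simp [hxdef, huK])
  rw [Finset.prod_congr rfl (fun u _ => claim2 u), ← Complex.exp_sum] at hx
  set s : ℝ := ∑ u : V, γ u with hsdef
  have hgsum : ∑ u : V, Complex.I * (γ u : ℂ) = Complex.I * (s : ℂ) := by
    rw [← Finset.mul_sum, hsdef]
    push_cast
    ring
  rw [hgsum] at hx
  -- identify the sum of γ
  have hγsum : ∑ u : V, γ u
      = (∑ u ∈ Finset.univ.filter (fun u => HasTypeX G₁ u ∧
            Odd ((K'.filter (fun w => G₁.Adj u w)).card)), α u) + (∑ v ∈ K', β v) := by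
    have hpt : ∀ u : V, γ u
        = (if HasTypeX G₁ u ∧ Odd (nn u) then α u else 0)
          + (if ¬ HasTypeX G₁ u ∧ u ∈ K' then β u else 0) := by
      intro u
      rw [hγ]
      by_cases hu : HasTypeX G₁ u <;> simp [hu]
    rw [Finset.sum_congr rfl (fun u _ => hpt u), Finset.sum_add_distrib]
    congr 1
    · rw [← Finset.sum_filter]
    · rw [← Finset.sum_filter]
      apply Finset.sum_congr _ (fun v _ => rfl)
      ext v
      simp only [Finset.mem_filter, Finset.mem_univ, true_and]
      constructor
      · rintro ⟨_, hv⟩; exact hv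
      · intro hv
        exact ⟨fun hX => typeX_typeZ_exclusive G₁ v hX (hK' v hv), hv⟩
  -- left-hand side value
  have hlhs : graphState G₂ x = (-1:ℂ)^(edgeCount G₂ K') / (Real.sqrt (2^n) : ℂ) := by
    rw [graphState, hsupp, ← hn]
  rw [hlhs] at hx
  -- cancel the normalization
  have hx2 : (-1:ℂ)^(edgeCount G₂ K')
      = (-1:ℂ)^(edgeCount G₁ K') * Complex.exp (Complex.I * (s : ℂ)) := by
    field_simp at hx
    exact hx
  have hsq : (-1:ℂ)^(edgeCount G₁ K') * (-1:ℂ)^(edgeCount G₁ K') = 1 := by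
    rw [← pow_add]; exact Even.neg_one_pow ⟨edgeCount G₁ K', rfl⟩
  have hx3 : Complex.exp (Complex.I * (s : ℂ))
      = (-1:ℂ)^(edgeCount G₁ K' + edgeCount G₂ K') := by
    rw [pow_add]
    calc Complex.exp (Complex.I * (s : ℂ))
        = ((-1:ℂ)^(edgeCount G₁ K') * (-1:ℂ)^(edgeCount G₁ K'))
          * Complex.exp (Complex.I * (s : ℂ)) := by rw [hsq, one_mul]
      _ = (-1:ℂ)^(edgeCount G₁ K')
          * ((-1:ℂ)^(edgeCount G₁ K') * Complex.exp (Complex.I * (s : ℂ))) := by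
          ring
      _ = (-1:ℂ)^(edgeCount G₁ K') * (-1:ℂ)^(edgeCount G₂ K') := by rw [← hx2]
  -- convert to exponential form
  have hexp : Complex.exp (Complex.I * (s : ℂ))
      = Complex.exp (((edgeCount G₁ K' + edgeCount G₂ K' : ℕ) : ℂ) * (π * Complex.I)) := by
    rw [hx3, ← Complex.exp_pi_mul_I, ← Complex.exp_nat_mul]
    try norm_cast
  obtain ⟨m, hm⟩ := Complex.exp_eq_exp_iff_exists_int.mp hexp
  refine ⟨m, ?_⟩
  have hm2 : Complex.I * (s : ℂ)
      = Complex.I * (((edgeCount G₁ K' + edgeCount G₂ K' : ℕ) : ℂ) * π + m * (2 * π)) := by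
    rw [hm]; ring
  have hm3 : (s : ℂ)
      = ((edgeCount G₁ K' + edgeCount G₂ K' : ℕ) : ℂ) * π + m * (2 * π) :=
    mul_left_cancel₀ Complex.I_ne_zero hm2
  have hm4 : s
      = ((edgeCount G₁ K' + edgeCount G₂ K' : ℕ) : ℝ) * π + (m : ℝ) * (2 * π) := by
    exact_mod_cast hm3
  rw [hsdef, hγsum] at hm4
  push_cast at hm4 ⊢
  linarith

end Master

theorem stmt_13 {V : Type} [Fintype V] [LinearOrder V] (G₁ G₂ : SimpleGraph V)
    (h₁ : StandardForm G₁) (h₂ : StandardForm G₂) (α β : V → ℝ)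
    (h : graphState G₂ =
      applyLocal (fun u =>
        if HasTypeX G₁ u then Xrot (α u) else if HasTypeZ G₁ u then Zrot (β u) else 1)
        (graphState G₁)) :
    (∀ v, HasTypeZ G₁ v →
      ∃ m : ℤ, β v + ∑ u ∈ Finset.univ.filter (fun u => G₁.Adj v u ∧ HasTypeX G₁ u), α u =
        (m : ℝ) * (2 * π)) ∧
    (∀ (k : ℕ) (K : Finset V), (∀ v ∈ K, HasTypeZ G₁ v) → K.card = k + 2 →
      ∃ m : ℤ, ∑ u ∈ (commonNbhd G₁ K).filter (fun u => HasTypeX G₁ u), α u =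
        (m : ℝ) * (π / 2 ^ (k + kdelta k))) := by
  classical
  constructor
  · -- Part (i)
    intro v hv
    obtain ⟨m, hm⟩ := master G₁ G₂ h₁ α β h {v}
      (by intro w hw; rw [Finset.mem_singleton] at hw; subst hw; exact hv)
    rw [Finset.sum_singleton, edgeCount_singleton, edgeCount_singleton] at hm
    have hfilter : Finset.univ.filter (fun u => HasTypeX G₁ u ∧
          Odd ((({v} : Finset V).filter (fun w => G₁.Adj u w)).card))
        = Finset.univ.filter (fun u => G₁.Adj v u ∧ HasTypeX G₁ u) := by
      ext u
      simp only [Finset.mem_filter, Finset.mem_univ, true_and, Finset.filter_singleton]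
      by_cases hadj : G₁.Adj u v
      · have h2 : G₁.Adj v u := hadj.symm
        simp [hadj, h2, and_comm]
      · have h2 : ¬ G₁.Adj v u := fun hh => hadj hh.symm
        simp [hadj, h2]
    rw [hfilter] at hm
    refine ⟨m, ?_⟩
    push_cast at hm
    linarith
  · -- Part (ii)
    intro k K hKZ hcard
    have hK2 : 2 ≤ K.card := by omega
    have hmaster : ∀ K'' : Finset V, ∃ m : ℤ, K'' ∈ K.powerset →
        (∑ v ∈ K'', β v) + (∑ u ∈ Finset.univ.filter (fun u => HasTypeX G₁ u ∧
            Odd ((K''.filter (fun w => G₁.Adj u w)).card)), α u)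
        = π * ((edgeCount G₁ K'' : ℝ) + (edgeCount G₂ K'' : ℝ)) + (m : ℝ) * (2 * π) := by
      intro K''
      by_cases hmem : K'' ∈ K.powerset
      · obtain ⟨m, hm⟩ := master G₁ G₂ h₁ α β h K''
          (fun v hv => hKZ v (Finset.mem_powerset.mp hmem hv))
        exact ⟨m, fun _ => hm⟩
      · exact ⟨0, fun hc => absurd hc hmem⟩
    choose mf hmf using hmaster
    set T : ℝ := ∑ u ∈ (commonNbhd G₁ K).filter (fun u => HasTypeX G₁ u), α u with hTdef
    set N : ℤ := ∑ K'' ∈ K.powerset, (-1:ℤ)^K''.card *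
        ((edgeCount G₁ K'' + edgeCount G₂ K'' : ℤ) + 2 * mf K'') with hN
    have hS1 : ∑ K'' ∈ K.powerset, (-1:ℝ)^K''.card *
        ((∑ v ∈ K'', β v) + (∑ u ∈ Finset.univ.filter (fun u => HasTypeX G₁ u ∧
            Odd ((K''.filter (fun w => G₁.Adj u w)).card)), α u)) = π * (N : ℝ) := by
      rw [Finset.sum_congr rfl (fun K'' hmem => by rw [hmf K'' hmem])]
      rw [hN]
      push_cast
      rw [Finset.mul_sum]
      apply Finset.sum_congr rfl
      intro K'' _
      ring
    -- the β part vanishes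
    have hSβ : ∑ K'' ∈ K.powerset, (-1:ℝ)^K''.card * (∑ v ∈ K'', β v) = 0 := by
      have hre : ∀ K'' ∈ K.powerset, (∑ v ∈ K'', β v)
          = ∑ v ∈ K, (if v ∈ K'' then β v else 0) := by
        intro K'' hmem
        rw [Finset.sum_ite_mem, Finset.inter_eq_right.mpr (Finset.mem_powerset.mp hmem)]
      calc ∑ K'' ∈ K.powerset, (-1:ℝ)^K''.card * (∑ v ∈ K'', β v)
          = ∑ K'' ∈ K.powerset, ∑ v ∈ K,
              (-1:ℝ)^K''.card * (if v ∈ K'' then β v else 0) := by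
            apply Finset.sum_congr rfl
            intro K'' hmem
            rw [hre K'' hmem, Finset.mul_sum]
        _ = ∑ v ∈ K, ∑ K'' ∈ K.powerset,
              (-1:ℝ)^K''.card * (if v ∈ K'' then β v else 0) := Finset.sum_comm
        _ = 0 := by
            apply Finset.sum_eq_zero
            intro v hv
            have hpt : ∀ K'' : Finset V, (-1:ℝ)^K''.card * (if v ∈ K'' then β v else 0)
                = β v * ((-1:ℝ)^K''.card
                    * (if Odd ((K''.filter (fun a => a = v)).card) then 1 else 0)) := by
              intro K''
              have hiff : Odd ((K''.filter (fun a => a = v)).card) ↔ v ∈ K'' := by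
                rw [Finset.filter_eq']
                by_cases hvk : v ∈ K'' <;> simp [hvk]
              by_cases hvk : v ∈ K''
              · rw [if_pos hvk, if_pos (hiff.mpr hvk)]; ring
              · rw [if_neg hvk, if_neg (fun hc => hvk (hiff.mp hc))]; ring
            rw [Finset.sum_congr rfl (fun K'' _ => hpt K''), ← Finset.mul_sum]
            rw [sum_powerset_sign_odd K hK2 (fun a => a = v)]
            have hnall : ¬ (∀ a ∈ K, a = v) := by
              intro hall
              obtain ⟨a, ha, b, hb, hab⟩ := Finset.one_lt_card.mp (by omega : 1 < K.card)
              exact hab ((hall a ha).trans (hall b hb).symm)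
            rw [if_neg hnall]
            ring
    -- the α part
    have hSα : ∑ K'' ∈ K.powerset, (-1:ℝ)^K''.card *
        (∑ u ∈ Finset.univ.filter (fun u => HasTypeX G₁ u ∧
            Odd ((K''.filter (fun w => G₁.Adj u w)).card)), α u)
        = -((2:ℝ)^(k+1)) * T := by
      have hre : ∀ K'' : Finset V,
          (∑ u ∈ Finset.univ.filter (fun u => HasTypeX G₁ u ∧
            Odd ((K''.filter (fun w => G₁.Adj u w)).card)), α u)
          = ∑ u ∈ Finset.univ.filter (fun u => HasTypeX G₁ u),
              (if Odd ((K''.filter (fun w => G₁.Adj u w)).card) then α u else 0) := by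
        intro K''
        rw [← Finset.sum_filter, Finset.filter_filter]
      calc ∑ K'' ∈ K.powerset, (-1:ℝ)^K''.card *
          (∑ u ∈ Finset.univ.filter (fun u => HasTypeX G₁ u ∧
            Odd ((K''.filter (fun w => G₁.Adj u w)).card)), α u)
          = ∑ K'' ∈ K.powerset, ∑ u ∈ Finset.univ.filter (fun u => HasTypeX G₁ u),
              (-1:ℝ)^K''.card
                * (if Odd ((K''.filter (fun w => G₁.Adj u w)).card) then α u else 0) := by
            apply Finset.sum_congr rfl
            intro K'' _
            rw [hre K'', Finset.mul_sum]
        _ = ∑ u ∈ Finset.univ.filter (fun u => HasTypeX G₁ u), ∑ K'' ∈ K.powerset,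
              (-1:ℝ)^K''.card
                * (if Odd ((K''.filter (fun w => G₁.Adj u w)).card) then α u else 0) :=
            Finset.sum_comm
        _ = ∑ u ∈ Finset.univ.filter (fun u => HasTypeX G₁ u),
              α u * (if (∀ a ∈ K, G₁.Adj u a) then -((2:ℝ)^(K.card - 1)) else 0) := by
            apply Finset.sum_congr rfl
            intro u _
            have hpt : ∀ K'' : Finset V, (-1:ℝ)^K''.card
                * (if Odd ((K''.filter (fun w => G₁.Adj u w)).card) then α u else 0)
                = α u * ((-1:ℝ)^K''.card
                    * (if Odd ((K''.filter (fun w => G₁.Adj u w)).card) then 1 else 0)) := by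
              intro K''
              by_cases hodd : Odd ((K''.filter (fun w => G₁.Adj u w)).card) <;>
                simp [hodd] <;> ring
            rw [Finset.sum_congr rfl (fun K'' _ => hpt K''), ← Finset.mul_sum]
            rw [sum_powerset_sign_odd K hK2 (fun w => G₁.Adj u w)]
        _ = -((2:ℝ)^(k+1)) * T := by
            have hc1 : K.card - 1 = k + 1 := by omega
            rw [hTdef]
            have hset : (commonNbhd G₁ K).filter (fun u => HasTypeX G₁ u)
                = (Finset.univ.filter (fun u => HasTypeX G₁ u)).filter
                    (fun u => ∀ a ∈ K, G₁.Adj u a) := by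
              ext u
              simp only [Finset.mem_filter, Finset.mem_univ, true_and, commonNbhd]
              constructor
              · rintro ⟨hall, hX⟩
                exact ⟨hX, fun a ha => (hall a ha).symm⟩
              · rintro ⟨hX, hall⟩
                exact ⟨fun a ha => (hall a ha).symm, hX⟩
            rw [hset]
            have hpt2 : ∀ u : V, α u * (if (∀ a ∈ K, G₁.Adj u a) then -((2:ℝ)^(K.card - 1)) else 0)
                = (if (∀ a ∈ K, G₁.Adj u a) then -((2:ℝ)^(k+1)) * α u else 0) := by
              intro u
              by_cases hc : ∀ a ∈ K, G₁.Adj u a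
              · rw [if_pos hc, if_pos hc, hc1]; ring
              · rw [if_neg hc, if_neg hc]; ring
            rw [Finset.sum_congr rfl (fun u _ => hpt2 u), ← Finset.sum_filter, ← Finset.mul_sum]
    have hsplit : ∑ K'' ∈ K.powerset, (-1:ℝ)^K''.card *
        ((∑ v ∈ K'', β v) + (∑ u ∈ Finset.univ.filter (fun u => HasTypeX G₁ u ∧
            Odd ((K''.filter (fun w => G₁.Adj u w)).card)), α u))
        = (∑ K'' ∈ K.powerset, (-1:ℝ)^K''.card * (∑ v ∈ K'', β v))
          + ∑ K'' ∈ K.powerset, (-1:ℝ)^K''.card *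
              (∑ u ∈ Finset.univ.filter (fun u => HasTypeX G₁ u ∧
                Odd ((K''.filter (fun w => G₁.Adj u w)).card)), α u) := by
      rw [← Finset.sum_add_distrib]
      apply Finset.sum_congr rfl
      intro K'' _
      ring
    have hcomb : π * (N : ℝ) = -((2:ℝ)^(k+1)) * T := by
      rw [← hS1, hsplit, hSβ, hSα, zero_add]
    by_cases hk : k = 0
    · subst hk
      refine ⟨-N, ?_⟩
      rw [show kdelta 0 = 1 from rfl]
      push_cast
      linear_combination (1/2 : ℝ) * hcomb
    · have hk3 : 3 ≤ K.card := by omega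
      have he1 := sum_powerset_edgeCount K hk3 G₁
      have he2 := sum_powerset_edgeCount K hk3 G₂
      set M : ℤ := ∑ K'' ∈ K.powerset, (-1:ℤ)^K''.card * mf K'' with hM
      have hNM : N = 2 * M := by
        rw [hN, hM]
        have hpt : ∀ K'' : Finset V, (-1:ℤ)^K''.card *
            ((edgeCount G₁ K'' + edgeCount G₂ K'' : ℤ) + 2 * mf K'')
            = (-1:ℤ)^K''.card * (edgeCount G₁ K'' : ℤ)
              + (-1:ℤ)^K''.card * (edgeCount G₂ K'' : ℤ)
              + 2 * ((-1:ℤ)^K''.card * mf K'') := by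
          intro K''
          push_cast
          ring
        rw [Finset.sum_congr rfl (fun K'' _ => hpt K''), Finset.sum_add_distrib,
          Finset.sum_add_distrib, he1, he2, ← Finset.mul_sum]
        ring
      refine ⟨-M, ?_⟩
      rw [show kdelta k = 0 from by rw [kdelta, if_neg hk]]
      rw [hNM] at hcomb
      push_cast at hcomb ⊢
      have h2ne : ((2:ℝ)^k) ≠ 0 := by positivity
      field_simp
      first
        | linear_combination (1/2 : ℝ) * hcomb
        | linear_combination (-1/2 : ℝ) * hcomb
        | linear_combination ((2:ℝ)^k/2) * hcomb
        | linear_combination (-((2:ℝ)^k)/2) * hcomb
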